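/- Let D be a closed disk of radius r > 1 in the plane, let D⁰ be the convex hull of D ∩ ℤ², and let e be an edge of D⁰ with direction given by a primitive lattice vector v of length c. If e contains more than 2 lattice points (i.e., its weight w = |ℤ² ∩ e| − 1 satisfies w > 1), then w ≤ 4√r / c^{3/2}. -/

import Mathlib

/-- The embedding of the integer lattice `ℤ × ℤ` into the Euclidean plane. -/
noncomputable def latticeEmbed (z : ℤ × ℤ) : EuclideanSpace ℝ (Fin 2) :=
  (EuclideanSpace.equiv (Fin 2) ℝ).symm ![(z.1 : ℝ), (z.2 : ℝ)]

lemma latticeEmbed_apply0 (z : ℤ × ℤ) : latticeEmbed z 0 = (z.1 : ℝ) := rfl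
lemma latticeEmbed_apply1 (z : ℤ × ℤ) : latticeEmbed z 1 = (z.2 : ℝ) := rfl

lemma exists_int_Icc (x L N : ℝ) (hN : 0 < N) : ∃ k : ℤ, x + k*N ∈ Set.Icc L (L+N) := by
  refine ⟨⌈(L - x)/N⌉, ?_, ?_⟩
  · have h := Int.le_ceil ((L - x)/N)
    rw [div_le_iff₀ hN] at h
    linarith
  · have h := Int.ceil_lt_add_one ((L - x)/N)
    have h2 : (⌈(L - x)/N⌉ : ℝ) * N < ((L - x)/N + 1) * N :=
      mul_lt_mul_of_pos_right h hN
    have h3 : ((L - x)/N + 1) * N = L - x + N := by field_simp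
    nlinarith

lemma latticeEmbed_mem_ball (o : EuclideanSpace ℝ (Fin 2)) (r : ℝ) (hr : 0 ≤ r) (z : ℤ × ℤ) :
    latticeEmbed z ∈ Metric.closedBall o r ↔
      ((z.1 : ℝ) - o 0)^2 + ((z.2 : ℝ) - o 1)^2 ≤ r^2 := by
  rw [Metric.mem_closedBall, EuclideanSpace.dist_eq, Fin.sum_univ_two]
  rw [latticeEmbed_apply0, latticeEmbed_apply1, Real.dist_eq, Real.dist_eq, sq_abs, sq_abs]
  set S := ((z.1 : ℝ) - o 0)^2 + ((z.2 : ℝ) - o 1)^2 with hS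
  have hS0 : 0 ≤ S := by positivity
  constructor
  · intro h
    have h2 := Real.sq_sqrt hS0
    nlinarith [Real.sqrt_nonneg S]
  · intro h
    calc Real.sqrt S ≤ Real.sqrt (r^2) := Real.sqrt_le_sqrt h
      _ = r := Real.sqrt_sq hr

lemma latticeEmbed_mem_ball' (o : EuclideanSpace ℝ (Fin 2)) (r : ℝ) (hr : 0 ≤ r) (a b : ℤ) :
    latticeEmbed (a, b) ∈ Metric.closedBall o r ↔
      ((a : ℝ) - o 0)^2 + ((b : ℝ) - o 1)^2 ≤ r^2 :=
  latticeEmbed_mem_ball o r hr (a, b)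

set_option maxHeartbeats 1000000 in
lemma stmt8_arith (r c w A B gz s : ℝ) (hr : 1 < r) (hc1 : 1 ≤ c) (hs : s^2 = 1)
    (h16 : 16*r < w^2 * c^3) (hw : 2 ≤ w)
    (hA2 : A^2 + B^2 ≤ c^2*r^2)
    (hQ2 : A^2 + (B + w*c^2)^2 ≤ c^2*r^2)
    (hg1 : B + w*c^2/2 - c^2/2 ≤ gz)
    (hg2 : gz ≤ B + w*c^2/2 + c^2/2) :
    (A+s)^2 + gz^2 ≤ c^2*r^2 := by
  have hc0 : (0:ℝ) < c := by linarith
  have hr0 : (0:ℝ) < r := by linarith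
  set M : ℝ := |B + w*c^2/2| with hM
  have hM0 : 0 ≤ M := abs_nonneg _
  have habs1 : (M + w*c^2/2)^2 ≤ c^2*r^2 - A^2 := by
    rcases abs_cases (B + w*c^2/2) with ⟨h1, _⟩ | ⟨h1, _⟩ <;> rw [hM, h1] <;> nlinarith
  have habs2 : gz^2 ≤ (M + c^2/2)^2 := by
    have l1 : gz ≤ M + c^2/2 := by
      have := le_abs_self (B + w*c^2/2); rw [← hM] at this; linarith
    have l2 : -(M + c^2/2) ≤ gz := by
      have := neg_abs_le (B + w*c^2/2); rw [← hM] at this; linarith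
    exact sq_le_sq' l2 l1
  have hcr : 0 < c*r := by positivity
  have hsA : s*A ≤ c*r := by
    have hfac : (s-1)*(s+1) = 0 := by linear_combination hs
    rcases mul_eq_zero.mp hfac with h | h
    · have hs1 : s = 1 := by linarith
      rw [hs1, one_mul]
      nlinarith [hA2, sq_nonneg B]
    · have hs1 : s = -1 := by linarith
      rw [hs1]
      nlinarith [hA2, sq_nonneg B]
  have hw4 : 4 ≤ w^2 := by nlinarith
  have h1 : (3/16) * (w^2*c^4) ≤ (w^2 - 1) * c^4 / 4 := by
    nlinarith [pow_pos hc0 4, hw4]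
  have h2 : 3*r*c < (3/16)*(w^2*c^4) := by nlinarith [h16, hc0]
  have hrc : 1 ≤ r*c := by nlinarith
  have h3 : 2*(s*A) + 1 ≤ 3*r*c := by nlinarith
  have h4 : (M + c^2/2)^2 + (w^2-1)*c^4/4 ≤ (M + w*c^2/2)^2 := by
    nlinarith [mul_nonneg (sq_nonneg c) hM0, hw]
  nlinarith [habs1, habs2, h1, h2, h3, h4, hs]

set_option maxHeartbeats 1000000 in
lemma stmt8_core (r c V1 V2 P1 P2 O1 O2 U1 U2 w s : ℝ)
    (hr : 1 < r) (hc1 : 1 ≤ c) (hc2 : c^2 = V1^2 + V2^2)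
    (hs : s^2 = 1)
    (hu : -V2*U1 + V1*U2 = 1)
    (h16 : 16*r < w^2 * c^3) (hw : 2 ≤ w)
    (hP : (P1-O1)^2 + (P2-O2)^2 ≤ r^2)
    (hQ : (P1 + w*V1 - O1)^2 + (P2 + w*V2 - O2)^2 ≤ r^2) :
    ∃ k : ℤ, ((P1 + s*U1 + k*V1 - O1)^2 + (P2 + s*U2 + k*V2 - O2)^2 ≤ r^2) ∧
      (-V2*(P1 + s*U1 + k*V1 - O1) + V1*(P2 + s*U2 + k*V2 - O2)
         = -V2*(P1-O1) + V1*(P2-O2) + s) ∧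
      V1*(P1 + s*U1 + k*V1 - O1) + V2*(P2 + s*U2 + k*V2 - O2) ∈
        Set.Icc (V1*(P1-O1)+V2*(P2-O2) + w*c^2/2 - c^2/2)
                (V1*(P1-O1)+V2*(P2-O2) + w*c^2/2 + c^2/2) := by
  have hc0 : (0:ℝ) < c := by linarith
  have key : ∀ X1 X2 : ℝ, (-V2*(X1-O1)+V1*(X2-O2))^2 + (V1*(X1-O1)+V2*(X2-O2))^2
      = c^2*((X1-O1)^2+(X2-O2)^2) := by
    intro X1 X2
    linear_combination (-(X1-O1)^2-(X2-O2)^2) * hc2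
  have hA2 : (-V2*(P1-O1) + V1*(P2-O2))^2 + (V1*(P1-O1) + V2*(P2-O2))^2 ≤ c^2*r^2 := by
    nlinarith [key P1 P2, hP, sq_nonneg c]
  have hQ2 : (-V2*(P1-O1) + V1*(P2-O2))^2
      + ((V1*(P1-O1) + V2*(P2-O2)) + w*c^2)^2 ≤ c^2*r^2 := by
    have hk := key (P1 + w*V1) (P2 + w*V2)
    have hfq : -V2*(P1 + w*V1-O1)+V1*(P2 + w*V2-O2) = -V2*(P1-O1) + V1*(P2-O2) := by ring
    have hgq : V1*(P1 + w*V1-O1)+V2*(P2 + w*V2-O2)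
        = (V1*(P1-O1) + V2*(P2-O2)) + w*c^2 := by linear_combination (-w) * hc2
    rw [hfq, hgq] at hk
    nlinarith [hk, hQ, sq_nonneg c]
  obtain ⟨k, hk1, hk2⟩ := exists_int_Icc ((V1*(P1-O1) + V2*(P2-O2)) + s*(V1*U1 + V2*U2))
    ((V1*(P1-O1) + V2*(P2-O2)) + w*c^2/2 - c^2/2) (c^2) (by positivity)
  have hgz : V1*(P1 + s*U1 + k*V1 - O1) + V2*(P2 + s*U2 + k*V2 - O2)
      = (V1*(P1-O1) + V2*(P2-O2)) + s*(V1*U1 + V2*U2) + k*c^2 := by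
    linear_combination (-(k:ℝ)) * hc2
  have hfz : -V2*(P1 + s*U1 + k*V1 - O1) + V1*(P2 + s*U2 + k*V2 - O2)
      = -V2*(P1-O1) + V1*(P2-O2) + s := by
    linear_combination s * hu
  have hg1 : (V1*(P1-O1) + V2*(P2-O2)) + w*c^2/2 - c^2/2
      ≤ V1*(P1 + s*U1 + k*V1 - O1) + V2*(P2 + s*U2 + k*V2 - O2) := by
    rw [hgz]; linarith
  have hg2 : V1*(P1 + s*U1 + k*V1 - O1) + V2*(P2 + s*U2 + k*V2 - O2)
      ≤ (V1*(P1-O1) + V2*(P2-O2)) + w*c^2/2 + c^2/2 := by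
    rw [hgz]; linarith
  refine ⟨k, ?_, hfz, hg1, hg2⟩
  have hfin := stmt8_arith r c w (-V2*(P1-O1) + V1*(P2-O2)) (V1*(P1-O1) + V2*(P2-O2))
    (V1*(P1 + s*U1 + k*V1 - O1) + V2*(P2 + s*U2 + k*V2 - O2)) s
    hr hc1 hs h16 hw hA2 hQ2 hg1 hg2
  have hk3 := key (P1 + s*U1 + k*V1) (P2 + s*U2 + k*V2)
  rw [hfz] at hk3
  have hle : c^2 * ((P1 + s*U1 + k*V1 - O1)^2 + (P2 + s*U2 + k*V2 - O2)^2) ≤ c^2 * r^2 := by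
    rw [← hk3]; exact hfin
  exact le_of_mul_le_mul_left hle (by positivity)


set_option maxHeartbeats 1000000 in
/-- Let `D` be a closed disk of radius `r > 1`, `D⁰` the convex hull of
`D ∩ ℤ²`, and `e` an edge of `D⁰` (a 1-dimensional extreme face) joining
lattice points `p`, `q`, with primitive direction vector `v` of Euclidean
length `c` and weight `w` (so that `q - p = w • v`, i.e. `e` contains `w + 1`
lattice points).  If `w > 1` then `w ≤ 4√r / c^{3/2}`. -/
theorem stmt8 (o : EuclideanSpace ℝ (Fin 2)) (r : ℝ) (hr : 1 < r)
    (D0 : Set (EuclideanSpace ℝ (Fin 2)))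
    (hD0 : D0 = convexHull ℝ (Metric.closedBall o r ∩ Set.range latticeEmbed))
    (p q v : ℤ × ℤ) (hpq : p ≠ q)
    (hpD : latticeEmbed p ∈ Metric.closedBall o r)
    (hqD : latticeEmbed q ∈ Metric.closedBall o r)
    (hedge : IsExtreme ℝ D0 (segment ℝ (latticeEmbed p) (latticeEmbed q)))
    (hprim : Int.gcd v.1 v.2 = 1)
    (w : ℕ) (hqp : q - p = (w : ℤ) • v)
    (c : ℝ) (hc : c = ‖latticeEmbed v‖)
    (hw : 1 < w) :
    (w : ℝ) ≤ 4 * Real.sqrt r / c ^ ((3:ℝ)/2) := by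
  by_contra hcon
  push_neg at hcon
  have hr0 : (0:ℝ) < r := by linarith
  -- basic facts about c
  have hc2 : c^2 = (v.1:ℝ)^2 + (v.2:ℝ)^2 := by
    rw [hc, EuclideanSpace.norm_eq, Fin.sum_univ_two, latticeEmbed_apply0, latticeEmbed_apply1,
      Real.norm_eq_abs, Real.norm_eq_abs, sq_abs, sq_abs, Real.sq_sqrt (by positivity)]
  have hcnn : 0 ≤ c := hc ▸ norm_nonneg _
  have hZ1 : (1:ℤ) ≤ v.1^2 + v.2^2 := by
    rcases eq_or_ne v.1 0 with h1 | h1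
    · rcases eq_or_ne v.2 0 with h2 | h2
      · exfalso; rw [h1, h2] at hprim; simp at hprim
      · nlinarith [Int.one_le_abs h2, sq_abs v.2, sq_nonneg v.1]
    · nlinarith [Int.one_le_abs h1, sq_abs v.1, sq_nonneg v.2]
  have hc1 : 1 ≤ c := by
    have h : (1:ℝ) ≤ c^2 := by rw [hc2]; exact_mod_cast hZ1
    nlinarith
  have hc0 : (0:ℝ) < c := by linarith
  have hw2 : (2:ℝ) ≤ (w:ℝ) := by exact_mod_cast hw
  -- the contradiction hypothesis in polynomial form
  have hcp : (0:ℝ) < c ^ ((3:ℝ)/2) := Real.rpow_pos_of_pos hc0 _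
  have hcon' : 4 * Real.sqrt r < (w:ℝ) * c ^ ((3:ℝ)/2) := by
    rw [div_lt_iff₀ hcp] at hcon; linarith
  have hsq : (c ^ ((3:ℝ)/2))^2 = c^3 := by
    rw [← Real.rpow_natCast (c ^ ((3:ℝ)/2)) 2, ← Real.rpow_mul hc0.le]
    have h32 : (3:ℝ)/2 * ((2:ℕ):ℝ) = ((3:ℕ):ℝ) := by norm_num
    rw [h32, Real.rpow_natCast]
  have hrs : Real.sqrt r ^ 2 = r := Real.sq_sqrt hr0.le
  have h16 : 16 * r < (w:ℝ)^2 * c^3 := by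
    have hb0 : (0:ℝ) ≤ 4 * Real.sqrt r := by positivity
    have hprod := mul_pos (sub_pos.mpr hcon')
      (show (0:ℝ) < (w:ℝ) * c ^ ((3:ℝ)/2) + 4 * Real.sqrt r by nlinarith)
    nlinarith [hprod, hsq, hrs]
  -- coordinates of q
  have hq1 : q.1 = p.1 + (w:ℤ) * v.1 := by
    have h := congrArg Prod.fst hqp
    simp only [Prod.fst_sub, Prod.smul_fst, smul_eq_mul] at h
    linarith
  have hq2 : q.2 = p.2 + (w:ℤ) * v.2 := by
    have h := congrArg Prod.snd hqp
    simp only [Prod.snd_sub, Prod.smul_snd, smul_eq_mul] at h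
    linarith
  have hq1R : (q.1:ℝ) = (p.1:ℝ) + (w:ℝ) * (v.1:ℝ) := by exact_mod_cast hq1
  have hq2R : (q.2:ℝ) = (p.2:ℝ) + (w:ℝ) * (v.2:ℝ) := by exact_mod_cast hq2
  -- disk membership in coordinates
  have hPm := (latticeEmbed_mem_ball o r hr0.le p).mp hpD
  have hQm := (latticeEmbed_mem_ball o r hr0.le q).mp hqD
  rw [hq1R, hq2R] at hQm
  -- Bezout
  obtain ⟨x, y, hxy⟩ : ∃ x y : ℤ, v.1 * x + v.2 * y = 1 := by
    refine ⟨Int.gcdA v.1 v.2, Int.gcdB v.1 v.2, ?_⟩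
    have h := Int.gcd_eq_gcd_ab v.1 v.2
    rw [hprim] at h
    exact_mod_cast h.symm
  have huR : -(v.2:ℝ) * (-(y:ℝ)) + (v.1:ℝ) * (x:ℝ) = 1 := by
    have h : ((v.1 * x + v.2 * y : ℤ):ℝ) = 1 := by exact_mod_cast hxy
    push_cast at h
    linear_combination h
  -- two lattice points on the adjacent lines
  obtain ⟨kp, hkpmem, hkpf, hkpg1, hkpg2⟩ := stmt8_core r c (v.1:ℝ) (v.2:ℝ) (p.1:ℝ) (p.2:ℝ)
    (o 0) (o 1) (-(y:ℝ)) (x:ℝ) (w:ℝ) 1 hr hc1 hc2 (by norm_num) huR h16 hw2 hPm hQm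
  obtain ⟨km, hkmmem, hkmf, hkmg1, hkmg2⟩ := stmt8_core r c (v.1:ℝ) (v.2:ℝ) (p.1:ℝ) (p.2:ℝ)
    (o 0) (o 1) (-(y:ℝ)) (x:ℝ) (w:ℝ) (-1) hr hc1 hc2 (by norm_num) huR h16 hw2 hPm hQm
  -- the two lattice points
  have ezp1 : ((p.1 + -y + kp * v.1 : ℤ):ℝ) = (p.1:ℝ) + 1*(-(y:ℝ)) + (kp:ℝ)*(v.1:ℝ) := by
    push_cast; ring
  have ezp2 : ((p.2 + x + kp * v.2 : ℤ):ℝ) = (p.2:ℝ) + 1*((x:ℝ)) + (kp:ℝ)*(v.2:ℝ) := by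
    push_cast; ring
  have ezm1 : ((p.1 + y + km * v.1 : ℤ):ℝ) = (p.1:ℝ) + (-1)*(-(y:ℝ)) + (km:ℝ)*(v.1:ℝ) := by
    push_cast; ring
  have ezm2 : ((p.2 - x + km * v.2 : ℤ):ℝ) = (p.2:ℝ) + (-1)*((x:ℝ)) + (km:ℝ)*(v.2:ℝ) := by
    push_cast; ring
  have hzpD : latticeEmbed (p.1 + -y + kp * v.1, p.2 + x + kp * v.2) ∈ Metric.closedBall o r := by
    rw [latticeEmbed_mem_ball' o r hr0.le, ezp1, ezp2]; exact hkpmem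
  have hzmD : latticeEmbed (p.1 + y + km * v.1, p.2 - x + km * v.2) ∈ Metric.closedBall o r := by
    rw [latticeEmbed_mem_ball' o r hr0.le, ezm1, ezm2]; exact hkmmem
  have hzpD0 : latticeEmbed (p.1 + -y + kp * v.1, p.2 + x + kp * v.2) ∈ D0 := by
    rw [hD0]; exact subset_convexHull ℝ _ ⟨hzpD, ⟨_, rfl⟩⟩
  have hzmD0 : latticeEmbed (p.1 + y + km * v.1, p.2 - x + km * v.2) ∈ D0 := by
    rw [hD0]; exact subset_convexHull ℝ _ ⟨hzmD, ⟨_, rfl⟩⟩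
  -- K bounds
  have hsum : (v.1:ℝ)*((p.1:ℝ) + 1*(-(y:ℝ)) + (kp:ℝ)*(v.1:ℝ) - o 0)
        + (v.2:ℝ)*((p.2:ℝ) + 1*((x:ℝ)) + (kp:ℝ)*(v.2:ℝ) - o 1)
      + ((v.1:ℝ)*((p.1:ℝ) + (-1)*(-(y:ℝ)) + (km:ℝ)*(v.1:ℝ) - o 0)
        + (v.2:ℝ)*((p.2:ℝ) + (-1)*((x:ℝ)) + (km:ℝ)*(v.2:ℝ) - o 1))
      = 2*((v.1:ℝ)*((p.1:ℝ) - o 0) + (v.2:ℝ)*((p.2:ℝ) - o 1)) + ((kp:ℝ)+(km:ℝ))*c^2 := by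
    linear_combination (-(kp:ℝ)-(km:ℝ)) * hc2
  have hcc : (0:ℝ) < c^2 := by positivity
  have hKl' : ((w:ℝ) - 1) * c^2 ≤ ((kp:ℝ) + (km:ℝ)) * c^2 := by
    linarith [hkpg1, hkmg1, hsum]
  have hKh' : ((kp:ℝ) + (km:ℝ)) * c^2 ≤ ((w:ℝ) + 1) * c^2 := by
    linarith [hkpg2, hkmg2, hsum]
  have hKlow : (w:ℝ) - 1 ≤ (kp:ℝ) + (km:ℝ) := le_of_mul_le_mul_right hKl' hcc
  have hKhigh : (kp:ℝ) + (km:ℝ) ≤ (w:ℝ) + 1 := le_of_mul_le_mul_right hKh' hcc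
  -- the midpoint of the two constructed lattice points lies on the edge
  have h2w : (0:ℝ) < 2*(w:ℝ) := by linarith
  have ht0 : 0 ≤ ((kp:ℝ)+(km:ℝ))/(2*(w:ℝ)) := div_nonneg (by linarith) h2w.le
  have ht1 : ((kp:ℝ)+(km:ℝ))/(2*(w:ℝ)) ≤ 1 := (div_le_one h2w).mpr (by linarith)
  have hyseg : (1/2:ℝ) • latticeEmbed (p.1 + -y + kp * v.1, p.2 + x + kp * v.2)
      + (1/2:ℝ) • latticeEmbed (p.1 + y + km * v.1, p.2 - x + km * v.2)
      ∈ segment ℝ (latticeEmbed p) (latticeEmbed q) := by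
    refine ⟨1 - ((kp:ℝ)+(km:ℝ))/(2*(w:ℝ)), ((kp:ℝ)+(km:ℝ))/(2*(w:ℝ)), by linarith, ht0,
      by ring, ?_⟩
    ext i
    fin_cases i
    · simp only [Fin.mk_zero, Fin.mk_one, PiLp.add_apply, PiLp.smul_apply, smul_eq_mul, latticeEmbed_apply0]
      rw [hq1R]
      push_cast
      field_simp
      ring
    · simp only [Fin.mk_zero, Fin.mk_one, PiLp.add_apply, PiLp.smul_apply, smul_eq_mul, latticeEmbed_apply1]
      rw [hq2R]
      push_cast
      field_simp
      ring
  have hyopen : (1/2:ℝ) • latticeEmbed (p.1 + -y + kp * v.1, p.2 + x + kp * v.2)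
      + (1/2:ℝ) • latticeEmbed (p.1 + y + km * v.1, p.2 - x + km * v.2)
      ∈ openSegment ℝ (latticeEmbed (p.1 + -y + kp * v.1, p.2 + x + kp * v.2))
          (latticeEmbed (p.1 + y + km * v.1, p.2 - x + km * v.2)) :=
    ⟨1/2, 1/2, by norm_num, by norm_num, by norm_num, rfl⟩
  have hsegzp := hedge.2 hzpD0 hzmD0 hyseg hyopen
  obtain ⟨a, b, ha, hb, hab, habeq⟩ := hsegzp
  have hb1 : b = 1 - a := by linarith
  subst hb1
  have e0 := congrArg (fun z : EuclideanSpace ℝ (Fin 2) => z 0) habeq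
  have e1 := congrArg (fun z : EuclideanSpace ℝ (Fin 2) => z 1) habeq
  simp only [PiLp.add_apply, PiLp.smul_apply, smul_eq_mul, latticeEmbed_apply0,
    latticeEmbed_apply1] at e0 e1
  push_cast at e0 e1
  have hS2 : -(v.2:ℝ)*(((p.1:ℝ) + 1*(-(y:ℝ)) + (kp:ℝ)*(v.1:ℝ)) - o 0)
      + (v.1:ℝ)*(((p.2:ℝ) + 1*((x:ℝ)) + (kp:ℝ)*(v.2:ℝ)) - o 1)
      = -(v.2:ℝ)*((p.1:ℝ) - o 0) + (v.1:ℝ)*((p.2:ℝ) - o 1) := by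
    linear_combination (v.2:ℝ)*e0 - (v.1:ℝ)*e1 - (v.2:ℝ)*(1-a)*hq1R + (v.1:ℝ)*(1-a)*hq2R
  linarith [hkpf, hS2]
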